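/- For every facet F of I^n and every H_F ∈ K°_{n−1}(F), there exists H ∈ K°_n such that H_F = H ∩ F = H ∩ ∂I^n. -/

import Mathlib

open Set Function RealInnerProductSpace

noncomputable section

abbrev E (n : ℕ) := EuclideanSpace ℝ (Fin n)

/-- `I^d × {0}^{n-d}` inside `ℝ^n`. -/
def IcubeD (n d : ℕ) : Set (E n) :=
  {x | (∀ i : Fin n, (i : ℕ) < d → x i ∈ Icc (-1 : ℝ) 1) ∧
       ∀ i : Fin n, d ≤ (i : ℕ) → x i = 0}

/-- The cube `I^n = [-1,1]^n`. -/
def Icube (n : ℕ) : Set (E n) := IcubeD n n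

/-- `H^d_{ij}(a,b) = {x ∈ I^d × {0}^{n-d} : a·x_i ≥ b·x_j}`. -/
def HsetD (n d : ℕ) (i j : Fin n) (a b : ℝ) : Set (E n) :=
  {x ∈ IcubeD n d | b * x j ≤ a * x i}

def Hset (n : ℕ) (i j : Fin n) (a b : ℝ) : Set (E n) := HsetD n n i j a b

/-- The family `ℋ^d` of the sets `H^d_{ij}(a,b)`, `a, b ∈ {-1,1}`. -/
def HfamD (n d : ℕ) : Set (Set (E n)) :=
  {H | ∃ i j : Fin n, (i : ℕ) < d ∧ (j : ℕ) < d ∧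
      ∃ a b : ℝ, (a = 1 ∨ a = -1) ∧ (b = 1 ∨ b = -1) ∧ H = HsetD n d i j a b}

def Hfam (n : ℕ) : Set (Set (E n)) := HfamD n n

/-- Fundamental subsets of `ℋ^d`. -/
def IsFundSubsetD (n d : ℕ) (S : Set (Set (E n))) : Prop :=
  S ⊆ HfamD n d ∧
  ∀ i j : Fin n, (i : ℕ) < d → (j : ℕ) < d → i ≤ j →
    (HsetD n d i j 1 (-1) ∈ S ∨ HsetD n d i j (-1) 1 ∈ S) ∧
    (HsetD n d i j 1 1 ∈ S ∨ HsetD n d i j (-1) (-1) ∈ S)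

def IsFundSubset (n : ℕ) (S : Set (Set (E n))) : Prop := IsFundSubsetD n n S

/-- `K°_d` (realized inside `ℝ^n` on the slice `I^d × {0}^{n-d}`). -/
def KoD (n d : ℕ) : Set (Set (E n)) :=
  {K | ∃ S, IsFundSubsetD n d S ∧ K = ⋂₀ S}

/-- `K°_n`. -/
def Ko (n : ℕ) : Set (Set (E n)) := KoD n n

/-- Symmetries of the cube `I^n`. -/
def SymI (n : ℕ) (γ : E n → E n) : Prop :=
  Isometry γ ∧ Surjective γ ∧ γ '' Icube n = Icube n

/-- Conformal affine maps `x ↦ λ U x + v`, `λ > 0`, `U ∈ O(n)`. -/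
def ConfAffine (n : ℕ) (L : E n → E n) : Prop :=
  ∃ (c : ℝ) (U : E n ≃ₗᵢ[ℝ] E n) (v : E n), 0 < c ∧ ∀ x, L x = c • U x + v

/-- `d`-dimensional cubes in `ℝ^n` (for `d ≥ 1`). -/
def IsCube (n d : ℕ) (C : Set (E n)) : Prop :=
  ∃ L : E n → E n, ConfAffine n L ∧ L '' C = IcubeD n d

/-- `K°_d(C)` for a `d`-dimensional cube `C` (with `K°_0(C) = {C}`). -/
def KoCube (n d : ℕ) (C : Set (E n)) : Set (Set (E n)) :=
  {K | (d = 0 ∧ K = C) ∨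
       (1 ≤ d ∧ ∃ L : E n → E n, ConfAffine n L ∧ L '' C = IcubeD n d ∧
          ∃ H ∈ KoD n d, K = L ⁻¹' H)}

/-- Faces of `I^d × {0}^{n-d}` of dimension `e`. -/
def IsFaceD (n d : ℕ) (f : Set (E n)) (e : ℕ) : Prop :=
  ∃ J : Fin n → Set ℝ,
    (∀ i : Fin n, (i : ℕ) < d → (J i = Icc (-1 : ℝ) 1 ∨ J i = {-1} ∨ J i = {1})) ∧
    (∀ i : Fin n, d ≤ (i : ℕ) → J i = {0}) ∧
    {i : Fin n | J i = Icc (-1 : ℝ) 1}.ncard = e ∧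
    f = {x : E n | ∀ i, x i ∈ J i}

/-- `c` is a face of dimension `e` of the `d`-dimensional cube `C`. -/
def FaceOfCubeDim (n d : ℕ) (C c : Set (E n)) (e : ℕ) : Prop :=
  ∃ L : E n → E n, ConfAffine n L ∧ L '' C = IcubeD n d ∧
    ∃ f, IsFaceD n d f e ∧ c = L ⁻¹' f

/-- The symmetric decomposition `K_d(C)` of a `d`-dimensional cube `C`. -/
def KcalCube (n d : ℕ) (C : Set (E n)) : Set (Set (E n)) :=
  {K | ∃ c e, FaceOfCubeDim n d C c e ∧ K ∈ KoCube n e c}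

/-- `∂K_d(C)`: union of the `K°` of the proper faces of `C`. -/
def KcalBdCube (n d : ℕ) (C : Set (E n)) : Set (Set (E n)) :=
  {K | ∃ c e, FaceOfCubeDim n d C c e ∧ e < d ∧ K ∈ KoCube n e c}

/-- The symmetric decomposition `K_n` of `I^n`. -/
def Kcal (n : ℕ) : Set (Set (E n)) :=
  {K | ∃ c e, IsFaceD n n c e ∧ K ∈ KoCube n e c}

/-- `∂K_n`: union of the `K°` of the proper faces of `I^n`. -/
def KcalBdI (n : ℕ) : Set (Set (E n)) :=
  {K | ∃ c e, IsFaceD n n c e ∧ e < n ∧ K ∈ KoCube n e c}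

/-- `∂_∘ C`: the union of the proper faces of the `d`-cube `C`. -/
def cellBd (n d : ℕ) (C : Set (E n)) : Set (E n) :=
  ⋃₀ {c | ∃ e, e < d ∧ FaceOfCubeDim n d C c e}

/-- The cone `Cone(x, Y) = {x + t (y - x) : y ∈ Y, t ∈ [0,1]}`. -/
def Cone (n : ℕ) (x : E n) (Y : Set (E n)) : Set (E n) :=
  {z | ∃ y ∈ Y, ∃ t : ℝ, t ∈ Icc (0 : ℝ) 1 ∧ z = x + t • (y - x)}

/-- Standard orthotopes `∏ [-a_i, a_i]`. -/
def StdOrtho (n : ℕ) (a : Fin n → ℝ) : Set (E n) :=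
  {x | ∀ i, x i ∈ Icc (-(a i)) (a i)}

/-- `n`-dimensional orthotopes in `ℝ^n`. -/
def IsOrtho (n : ℕ) (R : Set (E n)) : Prop :=
  ∃ (L : E n → E n) (a : Fin n → ℝ), Isometry L ∧ Surjective L ∧
    (∀ i, 0 < a i) ∧ L '' R = StdOrtho n a

/-- The cubic-stretching of the standard orthotope `∏ [-a_i, a_i]`. -/
def stretch (n : ℕ) (a : Fin n → ℝ) : E n → E n :=
  fun x => WithLp.toLp 2 fun i => x i / a i

/-- `K_n(R)` for an `n`-dimensional orthotope `R`. -/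
def KcalOrtho (n : ℕ) (R : Set (E n)) : Set (Set (E n)) :=
  {K | ∃ (L : E n → E n) (a : Fin n → ℝ), Isometry L ∧ Surjective L ∧
      (∀ i, 0 < a i) ∧ L '' R = StdOrtho n a ∧
      ∃ H ∈ Kcal n, K = L ⁻¹' (stretch n a ⁻¹' H)}

/-- Faces of an `n`-dimensional orthotope `R`. -/
def FaceOfOrtho (n : ℕ) (R c : Set (E n)) : Prop :=
  ∃ (L : E n → E n) (a : Fin n → ℝ), Isometry L ∧ Surjective L ∧
    (∀ i, 0 < a i) ∧ L '' R = StdOrtho n a ∧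
    ∃ f e, IsFaceD n n f e ∧ c = L ⁻¹' (stretch n a ⁻¹' f)

/-- The center `x_α` of the subcube `C_α`. -/
def xalpha (n l : ℕ) (α : Fin n → ℕ) : E n :=
  WithLp.toLp 2 fun i => (2 * (α i : ℝ) + 1 - (l : ℝ)) / (l : ℝ)

/-- `T_α(x) = l (x - x_α)`, mapping `C_α` onto `I^n`. -/
def Talpha (n l : ℕ) (α : Fin n → ℕ) : E n → E n :=
  fun x => (l : ℝ) • (x - xalpha n l α)

/-- The refined symmetric decomposition `K_{n,l}`. -/
def Knl (n l : ℕ) : Set (Set (E n)) :=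
  {K | ∃ α : Fin n → ℕ, (∀ i, α i < l) ∧ ∃ H ∈ Kcal n, K = Talpha n l α ⁻¹' H}

/-- `Γ` is a group of surjective isometries of `ℝ^n`. -/
def IsIsomGroup (n : ℕ) (Γ : Set (E n → E n)) : Prop :=
  (∀ γ ∈ Γ, Isometry γ ∧ Surjective γ) ∧ id ∈ Γ ∧
  (∀ γ ∈ Γ, ∀ γ' ∈ Γ, γ ∘ γ' ∈ Γ) ∧
  ∀ γ ∈ Γ, ∃ γ' ∈ Γ, γ ∘ γ' = id ∧ γ' ∘ γ = id

/-- `D` is a fundamental domain of `Γ`. -/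
def IsFundDom (n : ℕ) (Γ : Set (E n → E n)) (D : Set (E n)) : Prop :=
  (∃ U : Set (E n), U.Nonempty ∧ IsOpen U ∧ IsConnected U ∧ D = closure U) ∧
  (⋃ γ ∈ Γ, γ '' D) = univ ∧
  (∀ x : E n, ∃ V : Set (E n), x ∈ V ∧ IsOpen V ∧
    {γ ∈ Γ | ((γ '' D) ∩ V).Nonempty}.Finite) ∧
  ∀ γ ∈ Γ, γ ≠ id → interior D ∩ interior (γ '' D) = ∅

namespace Aux7

variable {n : ℕ}

lemma nsq (x : E n) : ∑ i, x i * x i = ‖x‖^2 := by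
  rw [← real_inner_self_eq_norm_sq]
  simp only [PiLp.inner_apply, RCLike.inner_apply, conj_trivial]

lemma inner_eq (x y : E n) : ⟪x, y⟫ = ∑ i, x i * y i := by
  simp [PiLp.inner_apply, RCLike.inner_apply, mul_comm]

lemma coord_eq (x : E n) (j : Fin n) : x j = ⟪x, EuclideanSpace.single j (1:ℝ)⟫ := by
  simp [EuclideanSpace.inner_single_right]

lemma sum_ind (c : ℝ) : ∑ j : Fin n, (if (j:ℕ) < n-1 then c else 0) = (n-1 : ℕ) * c := by
  rw [Fin.sum_univ_eq_sum_range (fun i => if i < n-1 then c else 0) n]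
  rw [Finset.sum_ite, Finset.sum_const, Finset.sum_const]
  have : Finset.filter (fun i => i < n - 1) (Finset.range n) = Finset.range (n-1) := by
    ext i; simp [Finset.mem_filter, Finset.mem_range]; omega
  rw [this, Finset.card_range]
  simp [nsmul_eq_mul]

lemma sum_ite_k (k : Fin n) (c : ℝ) :
    ∑ i : Fin n, (if i = k then (0:ℝ) else c) = (n-1 : ℕ) * c := by
  rw [Finset.sum_ite, Finset.sum_const, Finset.sum_const]
  rw [Finset.filter_ne', Finset.card_erase_of_mem (Finset.mem_univ k)]
  simp [nsmul_eq_mul]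

/-- difference of two points of `IcubeD n (n-1)` has square norm at most `4(n-1)`. -/
lemma Q_diff_bound {q q' : E n} (hq : q ∈ IcubeD n (n-1)) (hq' : q' ∈ IcubeD n (n-1)) :
    ‖q - q'‖^2 ≤ 4 * ((n-1 : ℕ) : ℝ) := by
  rw [← nsq]
  have h1 : ∀ i : Fin n, (q - q') i * (q - q') i ≤ (if (i:ℕ) < n-1 then (4:ℝ) else 0) := by
    intro i
    have : (q - q') i = q i - q' i := by simp
    rw [this]
    by_cases hi : (i:ℕ) < n-1
    · rw [if_pos hi]
      have h2 := hq.1 i hi; have h3 := hq'.1 i hi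
      simp only [mem_Icc] at h2 h3
      nlinarith [h2.1, h2.2, h3.1, h3.2]
    · rw [if_neg hi]
      rw [hq.2 i (le_of_not_gt hi), hq'.2 i (le_of_not_gt hi)]
      norm_num
  calc ∑ i, (q - q') i * (q - q') i ≤ ∑ i : Fin n, (if (i:ℕ) < n-1 then (4:ℝ) else 0) :=
        Finset.sum_le_sum (fun i _ => h1 i)
    _ = (n-1 : ℕ) * 4 := sum_ind 4
    _ = 4 * ((n-1 : ℕ) : ℝ) := by ring

end Aux7

namespace Aux7
variable {n : ℕ}

def Fface (n : ℕ) (k : Fin n) (ε : ℝ) : Set (E n) :=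
  {x | x k = ε ∧ ∀ i, i ≠ k → x i ∈ Icc (-1:ℝ) 1}

def pvec (n : ℕ) (k : Fin n) (ε : ℝ) : E n := WithLp.toLp 2 fun i => if i = k then ε else 0

lemma pvec_mem (k : Fin n) {ε : ℝ} (hε : ε = 1 ∨ ε = -1) : pvec n k ε ∈ Fface n k ε := by
  refine ⟨by simp [pvec], fun i hi => ?_⟩
  simp only [pvec, PiLp.toLp_apply, if_neg hi]
  constructor <;> norm_num

lemma F_diff_bound {k : Fin n} {ε : ℝ} {x y : E n}
    (hx : x ∈ Fface n k ε) (hy : y ∈ Fface n k ε) :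
    ‖x - y‖^2 ≤ 4 * ((n-1 : ℕ) : ℝ) := by
  rw [← nsq]
  have h1 : ∀ i : Fin n, (x - y) i * (x - y) i ≤ (if i = k then (0:ℝ) else 4) := by
    intro i
    have hs : (x - y) i = x i - y i := by simp
    rw [hs]
    by_cases hi : i = k
    · subst hi; rw [if_pos rfl, hx.1, hy.1]; norm_num
    · rw [if_neg hi]
      have h2 := hx.2 i hi; have h3 := hy.2 i hi
      simp only [mem_Icc] at h2 h3
      nlinarith [h2.1, h2.2, h3.1, h3.2]
  calc ∑ i, (x - y) i * (x - y) i ≤ ∑ i : Fin n, (if i = k then (0:ℝ) else 4) :=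
        Finset.sum_le_sum (fun i _ => h1 i)
    _ = (n-1 : ℕ) * 4 := sum_ite_k k 4
    _ = 4 * ((n-1 : ℕ) : ℝ) := by ring

lemma F_center_bound {k : Fin n} {ε : ℝ} {x : E n} (hx : x ∈ Fface n k ε) :
    ‖x - pvec n k ε‖^2 ≤ ((n-1 : ℕ) : ℝ) := by
  rw [← nsq]
  have h1 : ∀ i : Fin n, (x - pvec n k ε) i * (x - pvec n k ε) i ≤ (if i = k then (0:ℝ) else 1) := by
    intro i
    have hs : (x - pvec n k ε) i = x i - pvec n k ε i := by simp
    rw [hs]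
    by_cases hi : i = k
    · subst hi; rw [if_pos rfl, hx.1]; simp [pvec]
    · rw [if_neg hi]
      have h2 := hx.2 i hi
      simp only [mem_Icc] at h2
      simp only [pvec, PiLp.toLp_apply, if_neg hi, sub_zero]
      nlinarith [h2.1, h2.2]
  calc ∑ i, _ ≤ ∑ i : Fin n, (if i = k then (0:ℝ) else 1) :=
        Finset.sum_le_sum (fun i _ => h1 i)
    _ = (n-1 : ℕ) * 1 := sum_ite_k k 1
    _ = ((n-1 : ℕ) : ℝ) := by ring

/-- vertex lemma for Q -/
lemma Q_vertex {q : E n} (hq : q ∈ IcubeD n (n-1)) (hnq : ‖q‖^2 = ((n-1:ℕ) : ℝ)) :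
    ∀ j : Fin n, (j:ℕ) < n-1 → q j = 1 ∨ q j = -1 := by
  have hsum : ∑ i : Fin n, ((if (i:ℕ) < n-1 then (1:ℝ) else 0) - q i * q i) = 0 := by
    rw [Finset.sum_sub_distrib, sum_ind, nsq, hnq]; ring
  have hnn : ∀ i ∈ (Finset.univ : Finset (Fin n)), (0:ℝ) ≤ (if (i:ℕ) < n-1 then (1:ℝ) else 0) - q i * q i := by
    intro i _
    by_cases hi : (i:ℕ) < n-1
    · rw [if_pos hi]
      have h2 := hq.1 i hi; simp only [mem_Icc] at h2
      nlinarith [h2.1, h2.2]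
    · rw [if_neg hi, hq.2 i (le_of_not_gt hi)]; norm_num
  have hall := (Finset.sum_eq_zero_iff_of_nonneg hnn).1 hsum
  intro j hj
  have := hall j (Finset.mem_univ j)
  rw [if_pos hj] at this
  have : q j * q j = 1 := by linarith
  exact mul_self_eq_one_iff.1 this

/-- vertex lemma for F -/
lemma F_vertex {k : Fin n} {ε : ℝ} {x : E n} (hx : x ∈ Fface n k ε)
    (hnx : ‖x - pvec n k ε‖^2 = ((n-1:ℕ) : ℝ)) :
    ∀ i : Fin n, i ≠ k → x i = 1 ∨ x i = -1 := by
  have happ : ∀ i : Fin n, (x - pvec n k ε) i = x i - pvec n k ε i := by intro i; simp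
  have hsum : ∑ i : Fin n, ((if i = k then (0:ℝ) else 1)
      - (x - pvec n k ε) i * (x - pvec n k ε) i) = 0 := by
    rw [Finset.sum_sub_distrib, sum_ite_k, nsq, hnx]; ring
  have hnn : ∀ i ∈ (Finset.univ : Finset (Fin n)), (0:ℝ) ≤ (if i = k then (0:ℝ) else 1)
      - (x - pvec n k ε) i * (x - pvec n k ε) i := by
    intro i _
    rw [happ i]
    by_cases hi : i = k
    · subst hi; rw [if_pos rfl, hx.1]; simp [pvec]
    · rw [if_neg hi]
      have h2 := hx.2 i hi; simp only [mem_Icc] at h2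
      simp only [pvec, PiLp.toLp_apply, if_neg hi, sub_zero]
      nlinarith [h2.1, h2.2]
  have hall := (Finset.sum_eq_zero_iff_of_nonneg hnn).1 hsum
  intro i hi
  have h := hall i (Finset.mem_univ i)
  rw [if_neg hi, happ i] at h
  simp only [pvec, PiLp.toLp_apply, if_neg hi, sub_zero] at h
  have : x i * x i = 1 := by linarith
  exact mul_self_eq_one_iff.1 this

end Aux7

namespace Aux7
variable {n : ℕ}

def sliceEquiv (n : ℕ) : {j : Fin n // (j:ℕ) < n-1} ≃ Fin (n-1) where
  toFun j := ⟨(j:ℕ), j.2⟩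
  invFun m := ⟨⟨(m:ℕ), lt_of_lt_of_le m.2 (Nat.sub_le n 1)⟩, m.2⟩
  left_inv j := by ext; rfl
  right_inv m := by ext; rfl

lemma adjoint (U : E n ≃ₗᵢ[ℝ] E n) (z w : E n) : ⟪U z, w⟫ = ⟪z, U.symm w⟫ := by
  conv_lhs => rw [show w = U (U.symm w) by simp]
  rw [LinearIsometryEquiv.inner_map_map]

lemma classify (hn : 2 ≤ n) (k : Fin n) {ε : ℝ} (hε : ε = 1 ∨ ε = -1)
    {L : E n → E n} (hL : ConfAffine n L) (hLF : L '' Fface n k ε = IcubeD n (n-1)) :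
    ∃ (τ : Fin n → Fin n) (s : Fin n → ℝ),
      (∀ j : Fin n, (j:ℕ) < n-1 → τ j ≠ k ∧ (s j = 1 ∨ s j = -1)) ∧
      (∀ i : Fin n, i ≠ k → ∃ j : Fin n, (j:ℕ) < n-1 ∧ τ j = i) ∧
      (∀ x ∈ Fface n k ε, ∀ j : Fin n, (j:ℕ) < n-1 → L x j = s j * x (τ j)) := by
  obtain ⟨c, U, v, hc, hLdef⟩ := hL
  have hfwd : ∀ x ∈ Fface n k ε, L x ∈ IcubeD n (n-1) := fun x hx =>
    hLF ▸ mem_image_of_mem L hx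
  have hbk : ∀ q ∈ IcubeD n (n-1), ∃ x ∈ Fface n k ε, L x = q := by
    intro q hq
    rw [← hLF] at hq
    obtain ⟨x, hx, he⟩ := hq
    exact ⟨x, hx, he⟩
  have hLsub : ∀ x y : E n, L x - L y = c • U (x - y) := by
    intro x y
    rw [hLdef, hLdef, map_sub, smul_sub]
    abel
  have hnormL : ∀ x y : E n, ‖L x - L y‖ = c * ‖x - y‖ := by
    intro x y
    rw [hLsub, norm_smul, U.norm_map, Real.norm_eq_abs, abs_of_pos hc]
  have hn1 : (1:ℝ) ≤ ((n-1:ℕ) : ℝ) := by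
    have : 1 ≤ n - 1 := by omega
    exact_mod_cast this
  -- the two opposite vertices of Q
  set qp : E n := WithLp.toLp 2 (fun j : Fin n => if (j:ℕ) < n-1 then 1 else 0) with hqpdef
  set qm : E n := WithLp.toLp 2 (fun j : Fin n => if (j:ℕ) < n-1 then -1 else 0) with hqmdef
  have hqpQ : qp ∈ IcubeD n (n-1) := by
    constructor
    · intro i hi; simp only [hqpdef, PiLp.toLp_apply, if_pos hi]; constructor <;> norm_num
    · intro i hi; simp only [hqpdef, PiLp.toLp_apply, if_neg (not_lt.2 hi)]
  have hqmQ : qm ∈ IcubeD n (n-1) := by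
    constructor
    · intro i hi; simp only [hqmdef, PiLp.toLp_apply, if_pos hi]; constructor <;> norm_num
    · intro i hi; simp only [hqmdef, PiLp.toLp_apply, if_neg (not_lt.2 hi)]
  obtain ⟨xp, hxp, hLxp⟩ := hbk qp hqpQ
  obtain ⟨xm, hxm, hLxm⟩ := hbk qm hqmQ
  have hqpnorm : ‖qp‖^2 = ((n-1:ℕ) : ℝ) := by
    rw [← nsq]
    have : ∀ i : Fin n, qp i * qp i = (if (i:ℕ) < n-1 then (1:ℝ) else 0) := by
      intro i; simp only [hqpdef, PiLp.toLp_apply]; split_ifs <;> norm_num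
    rw [Finset.sum_congr rfl (fun i _ => this i), sum_ind]
    ring
  have hqq : ‖qp - qm‖^2 = 4 * ((n-1:ℕ) : ℝ) := by
    rw [← nsq]
    have : ∀ i : Fin n, (qp - qm) i * (qp - qm) i = (if (i:ℕ) < n-1 then (4:ℝ) else 0) := by
      intro i
      have hs : (qp - qm) i = qp i - qm i := by simp
      rw [hs]; simp only [hqpdef, hqmdef, PiLp.toLp_apply]; split_ifs <;> norm_num
    rw [Finset.sum_congr rfl (fun i _ => this i), sum_ind]
    ring
  -- c = 1
  have hc2ge : 1 ≤ c^2 := by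
    have h1 : ‖L xp - L xm‖^2 = c^2 * ‖xp - xm‖^2 := by rw [hnormL]; ring
    rw [hLxp, hLxm, hqq] at h1
    have h2 := F_diff_bound hxp hxm
    nlinarith [sq_nonneg ‖xp - xm‖, norm_nonneg (xp - xm)]
  have hc2le : c^2 ≤ 1 := by
    set vp : E n := WithLp.toLp 2 (fun i : Fin n => if i = k then ε else 1) with hvpdef
    set vm : E n := WithLp.toLp 2 (fun i : Fin n => if i = k then ε else -1) with hvmdef
    have hvp : vp ∈ Fface n k ε := by
      refine ⟨by simp [hvpdef], fun i hi => ?_⟩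
      simp only [hvpdef, PiLp.toLp_apply, if_neg hi]; constructor <;> norm_num
    have hvm : vm ∈ Fface n k ε := by
      refine ⟨by simp [hvmdef], fun i hi => ?_⟩
      simp only [hvmdef, PiLp.toLp_apply, if_neg hi]; constructor <;> norm_num
    have hnv : ‖vp - vm‖^2 = 4 * ((n-1:ℕ) : ℝ) := by
      rw [← nsq]
      have : ∀ i : Fin n, (vp - vm) i * (vp - vm) i = (if i = k then (0:ℝ) else 4) := by
        intro i
        have hs : (vp - vm) i = vp i - vm i := by simp
        rw [hs]; simp only [hvpdef, hvmdef, PiLp.toLp_apply]; split_ifs <;> norm_num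
      rw [Finset.sum_congr rfl (fun i _ => this i), sum_ite_k]
      ring
    have h1 : ‖L vp - L vm‖^2 = c^2 * (4 * ((n-1:ℕ) : ℝ)) := by
      rw [hnormL, ← hnv]; ring
    have h2 := Q_diff_bound (hfwd vp hvp) (hfwd vm hvm)
    nlinarith
  have hc1 : c = 1 := by nlinarith
  have hL1 : ∀ x y : E n, L x - L y = U (x - y) := by
    intro x y; rw [hLsub, hc1, one_smul]
  have hnorm1 : ∀ x y : E n, ‖L x - L y‖ = ‖x - y‖ := by
    intro x y; rw [hnormL, hc1, one_mul]
  -- center maps to 0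
  set p : E n := pvec n k ε with hpdef
  have hpF : p ∈ Fface n k ε := pvec_mem k hε
  have hw0 : L p = 0 := by
    have h1 : ‖qp - L p‖^2 ≤ ((n-1:ℕ) : ℝ) := by
      rw [← hLxp, hnorm1]; exact F_center_bound hxp
    have h2 : ‖qm - L p‖^2 ≤ ((n-1:ℕ) : ℝ) := by
      rw [← hLxm, hnorm1]; exact F_center_bound hxm
    have hkey : ‖qp - L p‖^2 + ‖qm - L p‖^2
        = 2 * ((n-1:ℕ) : ℝ) + 2 * ∑ i, L p i * L p i := by
      rw [← nsq, ← nsq, ← Finset.sum_add_distrib, ← hqpnorm, ← nsq, Finset.mul_sum,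
        Finset.mul_sum, ← Finset.sum_add_distrib]
      refine Finset.sum_congr rfl (fun i _ => ?_)
      have h3 : (qp - L p) i = qp i - L p i := by simp
      have h4 : (qm - L p) i = qm i - L p i := by simp
      have h5 : qm i = - qp i := by simp only [hqpdef, hqmdef, PiLp.toLp_apply]; split_ifs <;> norm_num
      rw [h3, h4, h5]; ring
    have hiz : ∀ i ∈ (Finset.univ : Finset (Fin n)), L p i * L p i = 0 := by
      have hsle : ∑ i, L p i * L p i ≤ 0 := by linarith
      intro i hi
      have hge : ∀ i ∈ (Finset.univ : Finset (Fin n)), (0:ℝ) ≤ L p i * L p i :=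
        fun i _ => mul_self_nonneg _
      have := (Finset.sum_eq_zero_iff_of_nonneg hge).1 (le_antisymm hsle (Finset.sum_nonneg hge))
      exact this i hi
    ext i
    exact mul_self_eq_zero.mp (hiz i (Finset.mem_univ i))
  have hL2 : ∀ x : E n, L x = U (x - p) := by
    intro x
    have := hL1 x p
    rwa [hw0, sub_zero] at this
  have hUinv : ∀ x : E n, U.symm (L x) = x - p := by
    intro x; rw [hL2]; simp
  have hxpvert : ∀ i : Fin n, i ≠ k → xp i = 1 ∨ xp i = -1 := by
    refine F_vertex hxp ?_
    have : ‖xp - p‖ = ‖qp‖ := by rw [← hLxp, ← hnorm1 xp p, hw0, sub_zero]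
    rw [this, hqpnorm]
  -- coordinate description
  have main : ∀ j : Fin n, (j:ℕ) < n-1 → ∃ (i₀ : Fin n) (t : ℝ), i₀ ≠ k ∧ (t = 1 ∨ t = -1) ∧
      ∀ x ∈ Fface n k ε, L x j = t * x i₀ := by
    intro j hj
    set qj : E n := WithLp.toLp 2 (fun i : Fin n => if i = j then -1 else if (i:ℕ) < n-1 then 1 else 0) with hqjdef
    have hqjQ : qj ∈ IcubeD n (n-1) := by
      constructor
      · intro i hi; simp only [hqjdef, PiLp.toLp_apply]; split_ifs <;> constructor <;> norm_num
      · intro i hi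
        have hij : i ≠ j := by intro h; subst h; omega
        simp only [hqjdef, PiLp.toLp_apply, if_neg hij, if_neg (not_lt.2 hi)]
    obtain ⟨xj, hxj, hLxj⟩ := hbk qj hqjQ
    have hqjnorm : ‖qj‖^2 = ((n-1:ℕ) : ℝ) := by
      rw [← nsq]
      have : ∀ i : Fin n, qj i * qj i = (if (i:ℕ) < n-1 then (1:ℝ) else 0) := by
        intro i
        simp only [hqjdef, PiLp.toLp_apply]
        by_cases hij : i = j
        · subst hij; rw [if_pos rfl, if_pos hj]; norm_num
        · rw [if_neg hij]; split_ifs <;> norm_num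
      rw [Finset.sum_congr rfl (fun i _ => this i), sum_ind]; ring
    have hxjvert : ∀ i : Fin n, i ≠ k → xj i = 1 ∨ xj i = -1 := by
      refine F_vertex hxj ?_
      have : ‖xj - p‖ = ‖qj‖ := by rw [← hLxj, ← hnorm1 xj p, hw0, sub_zero]
      rw [this, hqjnorm]
    set g : E n := (2:ℝ)⁻¹ • (xp - xj) with hgdef
    have hgapp : ∀ i, g i = (xp i - xj i)/2 := by
      intro i; simp only [hgdef, PiLp.smul_apply, PiLp.sub_apply, smul_eq_mul]; ring
    have h3 : qp - qj = (2:ℝ) • EuclideanSpace.single j (1:ℝ) := by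
      ext i
      have hs : (qp - qj) i = qp i - qj i := by simp
      have ht : ((2:ℝ) • EuclideanSpace.single j (1:ℝ)) i
          = 2 * (if i = j then (1:ℝ) else 0) := by
        simp [EuclideanSpace.single_apply]
      rw [hs, ht]       -- may fail: funext on E n
      simp only [hqpdef, hqjdef, PiLp.toLp_apply]
      by_cases hij : i = j
      · subst hij; rw [if_pos hj, if_pos rfl, if_pos rfl]; norm_num
      · rw [if_neg hij, if_neg hij]; split_ifs <;> norm_num
    have hWj : U.symm (EuclideanSpace.single j (1:ℝ)) = g := by
      have h4 : U.symm (qp - qj) = xp - xj := by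
        have e1 : U.symm qp = xp - p := by rw [← hLxp]; exact hUinv xp
        have e2 : U.symm qj = xj - p := by rw [← hLxj]; exact hUinv xj
        rw [map_sub, e1, e2]; abel
      rw [h3, map_smul] at h4
      rw [hgdef, ← h4, smul_smul]
      norm_num
    have hgnorm : ∑ i, g i * g i = 1 := by
      rw [nsq, ← hWj, LinearIsometryEquiv.norm_map, EuclideanSpace.norm_single]
      norm_num
    have hgk : g k = 0 := by
      rw [hgapp, hxp.1, hxj.1]; ring
    have hgval : ∀ i, g i = 0 ∨ g i = 1 ∨ g i = -1 := by
      intro i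
      by_cases hik : i = k
      · subst hik; exact Or.inl hgk
      · rw [hgapp]
        rcases hxpvert i hik with h | h <;> rcases hxjvert i hik with h' | h' <;>
          rw [h, h'] <;> norm_num
    classical
    set D := Finset.univ.filter (fun i => g i ≠ 0) with hDdef
    have hsum : ∑ i, g i * g i = (D.card : ℝ) := by
      have : ∀ i : Fin n, g i * g i = (if g i ≠ 0 then (1:ℝ) else 0) := by
        intro i
        rcases hgval i with h | h | h <;> rw [h] <;> norm_num
      rw [Finset.sum_congr rfl (fun i _ => this i), Finset.sum_ite, Finset.sum_const,
        Finset.sum_const, hDdef]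
      simp
    have hcard : D.card = 1 := by
      have : (D.card : ℝ) = 1 := by rw [← hsum, hgnorm]
      exact_mod_cast this
    obtain ⟨i₀, hD⟩ := Finset.card_eq_one.1 hcard
    have hi₀ : g i₀ ≠ 0 := by
      have : i₀ ∈ D := hD ▸ Finset.mem_singleton_self i₀
      exact (Finset.mem_filter.1 this).2
    have hoff : ∀ i, i ≠ i₀ → g i = 0 := by
      intro i hi
      by_contra hgi
      have : i ∈ D := Finset.mem_filter.2 ⟨Finset.mem_univ i, hgi⟩
      rw [hD, Finset.mem_singleton] at this
      exact hi this
    have hi₀k : i₀ ≠ k := by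
      intro h; exact hi₀ (h ▸ hgk)
    refine ⟨i₀, g i₀, hi₀k, ?_, ?_⟩
    · rcases hgval i₀ with h | h | h
      · exact absurd h hi₀
      · exact Or.inl h
      · exact Or.inr h
    · intro x hx
      have h5 : L x j = ⟪x - p, g⟫ := by
        rw [coord_eq (L x) j, hL2, adjoint, hWj]
      rw [h5, inner_eq]
      have h6 : ∑ i, (x - p) i * g i = (x - p) i₀ * g i₀ := by
        refine Finset.sum_eq_single i₀ (fun i _ hi => ?_) (fun h => absurd (Finset.mem_univ i₀) h)
        rw [hoff i hi]; ring
      rw [h6]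
      have h7 : (x - p) i₀ = x i₀ := by
        have : (x - p) i₀ = x i₀ - p i₀ := by simp
        rw [this, hpdef]
        simp [pvec, if_neg hi₀k]
      rw [h7]; ring
  choose f t hfk ht hformula using main
  classical
  refine ⟨fun j => if h : (j:ℕ) < n-1 then f j h else k,
    fun j => if h : (j:ℕ) < n-1 then t j h else 1, ?_, ?_, ?_⟩
  · intro j hj
    simp only [dif_pos hj]
    exact ⟨hfk j hj, ht j hj⟩
  · -- surjectivity
    intro i hik
    have hinj : ∀ (j₁ j₂ : Fin n) (h1 : (j₁:ℕ) < n-1) (h2 : (j₂:ℕ) < n-1),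
        f j₁ h1 = f j₂ h2 → j₁ = j₂ := by
      intro j₁ j₂ h1 h2 hee
      by_contra hne
      set i₀ := f j₁ h1 with hi₀def
      have hi₀k : i₀ ≠ k := hfk j₁ h1
      set x : E n := p + EuclideanSpace.single i₀ (1:ℝ) with hxdef
      have hxapp : ∀ i', x i' = p i' + (if i' = i₀ then 1 else 0) := by
        intro i'
        have : x i' = p i' + (EuclideanSpace.single i₀ (1:ℝ)) i' := by simp [hxdef]
        rw [this, EuclideanSpace.single_apply]
      have hxF : x ∈ Fface n k ε := by
        constructor
        · rw [hxapp k, if_neg (fun h => hi₀k h.symm)]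
          rw [hpdef]
          simp [pvec]
        · intro i' hi'
          rw [hxapp i', hpdef]
          simp only [pvec, if_neg hi']
          by_cases h : i' = i₀
          · rw [if_pos h]; constructor <;> norm_num
          · rw [if_neg h]; constructor <;> norm_num
      have hnx : ‖x - p‖ = 1 := by
        rw [hxdef, add_sub_cancel_left, EuclideanSpace.norm_single, norm_one]
      have hLj : ∀ (j' : Fin n) (h' : (j':ℕ) < n-1),
          L x j' - L p j' = (if f j' h' = i₀ then t j' h' else 0) := by
        intro j' h'
        rw [hformula j' h' x hxF, hformula j' h' p hpF]
        have hps : p (f j' h') = 0 := by rw [hpdef]; simp [pvec, if_neg (hfk j' h')]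
        rw [hxapp (f j' h'), hps]
        split_ifs <;> ring
      have hn2 : ‖L x - L p‖^2 = 1 := by rw [hnorm1, hnx]; norm_num
      have hsumge : (2:ℝ) ≤ ∑ i', (L x - L p) i' * (L x - L p) i' := by
        have hpair : ∑ i' ∈ ({j₁, j₂} : Finset (Fin n)),
            (L x - L p) i' * (L x - L p) i' = 2 := by
          rw [Finset.sum_pair hne]
          have e1 : (L x - L p) j₁ = t j₁ h1 := by
            have hs : (L x - L p) j₁ = L x j₁ - L p j₁ := by simp
            rw [hs, hLj j₁ h1, if_pos rfl]
          have e2 : (L x - L p) j₂ = t j₂ h2 := by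
            have hs : (L x - L p) j₂ = L x j₂ - L p j₂ := by simp
            rw [hs, hLj j₂ h2, if_pos hee.symm]
          rw [e1, e2]
          rcases ht j₁ h1 with h|h <;> rcases ht j₂ h2 with h'|h' <;> rw [h, h'] <;> norm_num
        rw [← hpair]
        exact Finset.sum_le_sum_of_subset_of_nonneg (Finset.subset_univ _)
          (fun i' _ _ => mul_self_nonneg _)
      rw [nsq, hn2] at hsumge
      linarith
    have hcard1 : Fintype.card {j : Fin n // (j:ℕ) < n-1} = n - 1 := by
      rw [Fintype.card_congr (sliceEquiv n), Fintype.card_fin]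
    have hcard2 : Fintype.card {i' : Fin n // i' ≠ k} = n - 1 := by
      simp [Fintype.card_subtype_compl]
    set θ : {j : Fin n // (j:ℕ) < n-1} → {i' : Fin n // i' ≠ k} :=
      fun j => ⟨f j.1 j.2, hfk j.1 j.2⟩ with hθdef
    have hθinj : Function.Injective θ := by
      intro a b hab
      exact Subtype.ext (hinj a.1 b.1 a.2 b.2 (congrArg Subtype.val hab))
    have hθbij : Function.Bijective θ :=
      (Fintype.bijective_iff_injective_and_card θ).2 ⟨hθinj, by rw [hcard1, hcard2]⟩
    obtain ⟨j, hj⟩ := hθbij.2 ⟨i, hik⟩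
    refine ⟨j.1, j.2, ?_⟩
    simp only [dif_pos j.2]
    exact congrArg Subtype.val hj
  · intro x hx j hj
    show L x j = (if h : (j:ℕ) < n-1 then t j h else 1) * x (if h : (j:ℕ) < n-1 then f j h else k)
    rw [dif_pos hj, dif_pos hj]
    exact hformula j hj x hx

end Aux7






namespace Aux7
variable {n : ℕ}

lemma Icube_eq_pi : Icube n = WithLp.ofLp ⁻¹' Set.pi univ (fun _ : Fin n => Icc (-1:ℝ) 1) := by
  ext x
  simp only [Icube, IcubeD, mem_setOf_eq, mem_preimage, Set.mem_pi]
  constructor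
  · intro h i _
    exact h.1 i i.isLt
  · intro h
    exact ⟨fun i _ => h i trivial, fun i hi => absurd i.isLt (not_lt.2 hi)⟩

lemma frontier_Icube :
    frontier (Icube n) = {x | x ∈ Icube n ∧ ∃ i, x i = 1 ∨ x i = -1} := by
  have hpi := @Icube_eq_pi n
  have hcl : IsClosed (Icube n) := by
    rw [hpi]; exact (isClosed_set_pi (fun i _ => isClosed_Icc)).preimage (PiLp.continuous_ofLp 2 _)
  have hint : interior (Icube n) = WithLp.ofLp ⁻¹' Set.pi univ (fun _ : Fin n => Ioo (-1:ℝ) 1) := by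
    have := (PiLp.homeomorph 2 (fun _ : Fin n => ℝ)).preimage_interior
      (Set.pi univ fun _ => Icc (-1:ℝ) 1)
    rw [interior_pi_set finite_univ] at this
    simp only [interior_Icc] at this
    rw [hpi]; exact this.symm
  rw [hcl.frontier_eq, hint]
  ext x
  constructor
  · rintro ⟨h1, h2⟩
    have hb : ∀ i, x i ∈ Icc (-1:ℝ) 1 := by
      rw [hpi] at h1
      exact fun i => h1 i (mem_univ i)
    refine ⟨h1, ?_⟩
    have h3 : ¬ ∀ i ∈ (univ : Set (Fin n)), x i ∈ Ioo (-1:ℝ) 1 := h2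
    push_neg at h3
    obtain ⟨i, -, hi⟩ := h3
    refine ⟨i, ?_⟩
    rw [mem_Ioo] at hi
    push_neg at hi
    have hbi := hb i
    rw [mem_Icc] at hbi
    by_cases he : x i = -1
    · exact Or.inr he
    · left
      have hlt : -1 < x i := lt_of_le_of_ne hbi.1 (Ne.symm he)
      have := hi hlt
      linarith [hbi.2]
  · rintro ⟨h1, i, hi⟩
    refine ⟨h1, fun h2 => ?_⟩
    have := h2 i (mem_univ i)
    rw [mem_Ioo] at this
    rcases hi with h | h <;> rw [h] at this <;> linarith [this.1, this.2]

lemma Fface_sub_Icube {k : Fin n} {ε : ℝ} (hε : ε = 1 ∨ ε = -1) :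
    Fface n k ε ⊆ Icube n := by
  intro x hx
  refine ⟨fun i _ => ?_, fun i hi => absurd i.isLt (not_lt.2 hi)⟩
  by_cases h : i = k
  · subst h
    rw [hx.1]
    rcases hε with rfl | rfl <;> constructor <;> norm_num
  · exact hx.2 i h

lemma F_sub_frontier {k : Fin n} {ε : ℝ} (hε : ε = 1 ∨ ε = -1) {x : E n}
    (hx : x ∈ Fface n k ε) : x ∈ frontier (Icube n) := by
  rw [frontier_Icube]
  refine ⟨Fface_sub_Icube hε hx, k, ?_⟩
  rcases hε with rfl | rfl
  · exact Or.inl hx.1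
  · exact Or.inr hx.1

lemma Hset_swap (i j : Fin n) (a b : ℝ) : Hset n i j a b = Hset n j i (-b) (-a) := by
  ext x
  constructor
  · rintro ⟨h1, h2⟩
    exact ⟨h1, by linarith⟩
  · rintro ⟨h1, h2⟩
    exact ⟨h1, by linarith⟩

def Tset (n : ℕ) (k : Fin n) (ε : ℝ) : Set (Set (E n)) :=
  {B | ∃ (i : Fin n) (b : ℝ), (b = 1 ∨ b = -1) ∧ B = Hset n k i ε b}

lemma mem_T_of_F {k : Fin n} {ε : ℝ} (hε : ε = 1 ∨ ε = -1) {x : E n} (hx : x ∈ Fface n k ε)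
    (i : Fin n) {b : ℝ} (hb : b = 1 ∨ b = -1) : x ∈ Hset n k i ε b := by
  have hxc : x ∈ Icube n := Fface_sub_Icube hε hx
  refine ⟨hxc, ?_⟩
  have hxi : x i ∈ Icc (-1:ℝ) 1 := hxc.1 i i.isLt
  rw [mem_Icc] at hxi
  have hek : ε * x k = 1 := by
    rw [hx.1]; rcases hε with rfl | rfl <;> norm_num
  rw [hek]
  rcases hb with rfl | rfl <;> linarith [hxi.1, hxi.2]

lemma sgn_neg {a : ℝ} (h : a = 1 ∨ a = -1) : -a = 1 ∨ -a = -1 := by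
  rcases h with rfl | rfl
  · exact Or.inr rfl
  · exact Or.inl (by norm_num)

lemma sgn_mul {a b : ℝ} (ha : a = 1 ∨ a = -1) (hb : b = 1 ∨ b = -1) :
    a * b = 1 ∨ a * b = -1 := by
  rcases ha with rfl | rfl <;> rcases hb with rfl | rfl <;> norm_num

lemma fund_types {S : Set (Set (E n))} {i j : Fin n}
    (h1 : ∃ a b : ℝ, (a = 1 ∨ a = -1) ∧ (b = 1 ∨ b = -1) ∧ a * b = -1 ∧ HsetD n n i j a b ∈ S)
    (h2 : ∃ a b : ℝ, (a = 1 ∨ a = -1) ∧ (b = 1 ∨ b = -1) ∧ a * b = 1 ∧ HsetD n n i j a b ∈ S) :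
    (HsetD n n i j 1 (-1) ∈ S ∨ HsetD n n i j (-1) 1 ∈ S) ∧
    (HsetD n n i j 1 1 ∈ S ∨ HsetD n n i j (-1) (-1) ∈ S) := by
  constructor
  · obtain ⟨a, b, ha, hb, hab, hm⟩ := h1
    rcases ha with rfl | rfl <;> rcases hb with rfl | rfl
    · norm_num at hab
    · exact Or.inl hm
    · exact Or.inr hm
    · norm_num at hab
  · obtain ⟨a, b, ha, hb, hab, hm⟩ := h2
    rcases ha with rfl | rfl <;> rcases hb with rfl | rfl
    · exact Or.inl hm
    · norm_num at hab
    · norm_num at hab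
    · exact Or.inr hm

lemma fund_pair_k (k : Fin n) {ε : ℝ} (hε : ε = 1 ∨ ε = -1) {S : Set (Set (E n))}
    (hT : Tset n k ε ⊆ S) (i j : Fin n) (hij : i = k ∨ j = k) :
    (HsetD n n i j 1 (-1) ∈ S ∨ HsetD n n i j (-1) 1 ∈ S) ∧
    (HsetD n n i j 1 1 ∈ S ∨ HsetD n n i j (-1) (-1) ∈ S) := by
  rcases hij with rfl | rfl
  · -- i = k
    have hmem : ∀ b : ℝ, (b = 1 ∨ b = -1) → HsetD n n i j ε b ∈ S :=
      fun b hb => hT ⟨j, b, hb, rfl⟩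
    apply fund_types
    · exact ⟨ε, -ε, hε, sgn_neg hε, by rcases hε with rfl | rfl <;> norm_num,
        hmem (-ε) (sgn_neg hε)⟩
    · exact ⟨ε, ε, hε, hε, by rcases hε with rfl | rfl <;> norm_num, hmem ε hε⟩
  · -- j = k
    have hmem : ∀ b : ℝ, (b = 1 ∨ b = -1) → HsetD n n i j (-b) (-ε) ∈ S := by
      intro b hb
      show Hset n i j (-b) (-ε) ∈ S
      rw [← Hset_swap j i ε b]
      exact hT ⟨i, b, hb, rfl⟩
    apply fund_types
    · refine ⟨ε, -ε, hε, sgn_neg hε, by rcases hε with rfl | rfl <;> norm_num, ?_⟩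
      have := hmem (-ε) (sgn_neg hε)
      rwa [neg_neg] at this
    · exact ⟨-ε, -ε, sgn_neg hε, sgn_neg hε, by rcases hε with rfl | rfl <;> norm_num,
        hmem ε hε⟩

lemma bd_step {k : Fin n} {ε : ℝ} (hε : ε = 1 ∨ ε = -1) {S : Set (Set (E n))}
    (hT : Tset n k ε ⊆ S) {x : E n} (hx : x ∈ ⋂₀ S) (hfr : x ∈ frontier (Icube n)) :
    x ∈ Fface n k ε := by
  rw [frontier_Icube] at hfr
  obtain ⟨hxc, i₀, hi₀⟩ := hfr
  have h1 : x ∈ Hset n k i₀ ε 1 := hx _ (hT ⟨i₀, 1, Or.inl rfl, rfl⟩)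
  have h2 : x ∈ Hset n k i₀ ε (-1) := hx _ (hT ⟨i₀, -1, Or.inr rfl, rfl⟩)
  have hle : 1 ≤ ε * x k := by
    rcases hi₀ with h | h
    · have h3 := h1.2
      rw [h] at h3
      linarith
    · have h3 := h2.2
      rw [h] at h3
      linarith
  have hge : ε * x k ≤ 1 := by
    have h4 := hxc.1 k k.isLt
    rw [mem_Icc] at h4
    rcases hε with rfl | rfl <;> linarith [h4.1, h4.2]
  have hxk : x k = ε := by
    rcases hε with rfl | rfl <;> linarith
  exact ⟨hxk, fun i _ => hxc.1 i i.isLt⟩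

end Aux7


open Aux7 in
/-- For every facet `F` of `I^n` and every `H_F ∈ K°_{n-1}(F)` there exists
`H ∈ K°_n` with `H_F = H ∩ F = H ∩ ∂I^n`. -/
theorem stmt7 (n : ℕ) (hn : 1 ≤ n) (F : Set (E n)) (hF : IsFaceD n n F (n - 1))
    (HF : Set (E n)) (hHF : HF ∈ KoCube n (n - 1) F) :
    ∃ H ∈ Ko n, HF = H ∩ F ∧ HF = H ∩ frontier (Icube n) := by
  classical
  obtain ⟨J, hJ1, hJ2, hJcard, hJF⟩ := hF
  have hFs : ({i : Fin n | J i = Icc (-1:ℝ) 1}).ncard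
      = (Finset.univ.filter (fun i : Fin n => J i = Icc (-1:ℝ) 1)).card := by
    rw [Set.ncard_eq_toFinset_card']
    congr 1
    ext i
    simp
  have hcFs : (Finset.univ.filter (fun i : Fin n => J i = Icc (-1:ℝ) 1)).card = n - 1 := by
    rw [← hFs, hJcard]
  have hcompl :
      (Finset.univ \ Finset.univ.filter (fun i : Fin n => J i = Icc (-1:ℝ) 1)).card = 1 := by
    rw [Finset.card_sdiff_of_subset (Finset.subset_univ _), Finset.card_univ, Fintype.card_fin, hcFs]
    omega
  obtain ⟨k, hk⟩ := Finset.card_eq_one.1 hcompl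
  have hkmem : k ∈ Finset.univ \ Finset.univ.filter (fun i : Fin n => J i = Icc (-1:ℝ) 1) := by
    rw [hk]
    exact Finset.mem_singleton_self k
  have hkJ : J k ≠ Icc (-1:ℝ) 1 := by
    have := (Finset.mem_sdiff.1 hkmem).2
    simpa using this
  have hJiIcc : ∀ i : Fin n, i ≠ k → J i = Icc (-1:ℝ) 1 := by
    intro i hi
    by_contra h
    have hmem : i ∈ Finset.univ \ Finset.univ.filter (fun i : Fin n => J i = Icc (-1:ℝ) 1) :=
      Finset.mem_sdiff.2 ⟨Finset.mem_univ i, by simpa using h⟩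
    rw [hk, Finset.mem_singleton] at hmem
    exact hi hmem
  obtain ⟨ε, hε, hJkε⟩ : ∃ ε : ℝ, (ε = 1 ∨ ε = -1) ∧ J k = {ε} := by
    rcases hJ1 k k.isLt with h | h | h
    · exact absurd h hkJ
    · exact ⟨-1, Or.inr rfl, h⟩
    · exact ⟨1, Or.inl rfl, h⟩
  have hFface : F = Fface n k ε := by
    rw [hJF]
    ext x
    simp only [mem_setOf_eq]
    constructor
    · intro hx
      refine ⟨?_, fun i hi => ?_⟩
      · have h := hx k
        rw [hJkε] at h
        exact h
      · have h := hx i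
        rwa [hJiIcc i hi] at h
    · intro hx i
      by_cases h : i = k
      · subst h
        rw [hJkε]
        exact hx.1
      · rw [hJiIcc i h]
        exact hx.2 i h
  rcases hHF with ⟨h0, hHF0⟩ | ⟨hd1, L, hconf, hLF, Hd, hHd, hHFL⟩
  · -- the case n = 1
    refine ⟨⋂₀ Tset n k ε, ⟨Tset n k ε, ⟨?_, ?_⟩, rfl⟩, ?_, ?_⟩
    · rintro B ⟨i, b, hb, rfl⟩
      exact ⟨k, i, k.isLt, i.isLt, ε, b, hε, hb, rfl⟩
    · intro i j hi hj hij
      refine fund_pair_k k hε (subset_refl _) i j (Or.inl (Fin.ext ?_))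
      have h1 := i.isLt
      have h2 := k.isLt
      omega
    · rw [hHF0, hFface]
      apply subset_antisymm
      · intro x hx
        exact ⟨fun B hB => by
          obtain ⟨i, b, hb, rfl⟩ := hB
          exact mem_T_of_F hε hx i hb, hx⟩
      · exact inter_subset_right
    · rw [hHF0, hFface]
      apply subset_antisymm
      · intro x hx
        exact ⟨fun B hB => by
          obtain ⟨i, b, hb, rfl⟩ := hB
          exact mem_T_of_F hε hx i hb, F_sub_frontier hε hx⟩
      · rintro x ⟨hx1, hx2⟩
        exact bd_step hε (subset_refl _) hx1 hx2
  · -- the case n ≥ 2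
    have hn2 : 2 ≤ n := by omega
    have hLQ : L '' Fface n k ε = IcubeD n (n-1) := by
      rw [← hFface]
      exact hLF
    obtain ⟨τ, s, hτs, hτsurj, hLcoord⟩ := classify hn2 k hε hconf hLQ
    obtain ⟨S₀, ⟨hS₀sub, hS₀pairs⟩, hHdeq⟩ := hHd
    set SH : Set (Set (E n)) := {B | ∃ i' j' : Fin n, (i':ℕ) < n-1 ∧ (j':ℕ) < n-1 ∧
        ∃ a b : ℝ, (a = 1 ∨ a = -1) ∧ (b = 1 ∨ b = -1) ∧ HsetD n (n-1) i' j' a b ∈ S₀ ∧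
        B = Hset n (τ i') (τ j') (a * s i') (b * s j')} with hSHdef
    set S : Set (Set (E n)) := SH ∪ Tset n k ε with hSdef
    have hTS : Tset n k ε ⊆ S := subset_union_right
    have hLinj : Function.Injective L := by
      obtain ⟨c, U, v, hc, hLdef⟩ := hconf
      intro x y hxy
      rw [hLdef, hLdef] at hxy
      have h1 : c • U x = c • U y := add_left_injective v hxy
      have h2 : U x = U y := smul_right_injective (E n) (ne_of_gt hc) h1
      exact U.injective h2
    have hpre : ∀ x : E n, L x ∈ IcubeD n (n-1) → x ∈ Fface n k ε := by
      intro x hx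
      rw [← hLQ] at hx
      obtain ⟨y, hy, he⟩ := hx
      rwa [← hLinj he]
    have hfwd : ∀ x ∈ Fface n k ε, L x ∈ IcubeD n (n-1) := fun x hx =>
      hLQ ▸ mem_image_of_mem L hx
    have hBiff : ∀ (i' j' : Fin n), (i':ℕ) < n-1 → (j':ℕ) < n-1 → ∀ a b : ℝ,
        ∀ x ∈ Fface n k ε,
        (x ∈ Hset n (τ i') (τ j') (a * s i') (b * s j') ↔ L x ∈ HsetD n (n-1) i' j' a b) := by
      intro i' j' hi' hj' a b x hx
      have hxc : x ∈ Icube n := Fface_sub_Icube hε hx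
      have hLxQ : L x ∈ IcubeD n (n-1) := hfwd x hx
      have hci : L x i' = s i' * x (τ i') := hLcoord x hx i' hi'
      have hcj : L x j' = s j' * x (τ j') := hLcoord x hx j' hj'
      constructor
      · rintro ⟨-, hineq⟩
        refine ⟨hLxQ, ?_⟩
        rw [hci, hcj, ← mul_assoc, ← mul_assoc]
        exact hineq
      · rintro ⟨-, hineq⟩
        rw [hci, hcj, ← mul_assoc, ← mul_assoc] at hineq
        exact ⟨hxc, hineq⟩
    have hS₀ne : ∃ A, A ∈ S₀ := by
      have h0lt : ((⟨0, by omega⟩ : Fin n) : ℕ) < n - 1 := by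
        show 0 < n - 1
        omega
      rcases (hS₀pairs ⟨0, by omega⟩ ⟨0, by omega⟩ h0lt h0lt le_rfl).1 with h | h
      · exact ⟨_, h⟩
      · exact ⟨_, h⟩
    have hmain : ⋂₀ S ∩ Fface n k ε = HF := by
      ext x
      rw [hHFL, hHdeq]
      simp only [mem_inter_iff, mem_sInter, mem_preimage]
      constructor
      · rintro ⟨hxS, hxF⟩ A hA
        obtain ⟨i', j', hi', hj', a, b, ha, hb, hAeq⟩ := hS₀sub hA
        have hAS : HsetD n (n-1) i' j' a b ∈ S₀ := hAeq ▸ hA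
        have hB : Hset n (τ i') (τ j') (a * s i') (b * s j') ∈ S :=
          Or.inl ⟨i', j', hi', hj', a, b, ha, hb, hAS, rfl⟩
        rw [hAeq]
        exact (hBiff i' j' hi' hj' a b x hxF).1 (hxS _ hB)
      · intro hx
        have hxF : x ∈ Fface n k ε := by
          obtain ⟨A₀, hA₀⟩ := hS₀ne
          have h1 := hx A₀ hA₀
          obtain ⟨i', j', hi', hj', a, b, ha, hb, hAeq⟩ := hS₀sub hA₀
          rw [hAeq] at h1
          exact hpre x h1.1
        refine ⟨?_, hxF⟩
        rintro B (⟨i', j', hi', hj', a, b, ha, hb, hmem, rfl⟩ | ⟨i, b, hb, rfl⟩)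
        · exact (hBiff i' j' hi' hj' a b x hxF).2 (hx _ hmem)
        · exact mem_T_of_F hε hxF i hb
    refine ⟨⋂₀ S, ⟨S, ⟨?_, ?_⟩, rfl⟩, ?_, ?_⟩
    · rintro B (⟨i', j', hi', hj', a, b, ha, hb, hmem, rfl⟩ | ⟨i, b, hb, rfl⟩)
      · exact ⟨τ i', τ j', (τ i').isLt, (τ j').isLt, a * s i', b * s j',
          sgn_mul ha (hτs i' hi').2, sgn_mul hb (hτs j' hj').2, rfl⟩
      · exact ⟨k, i, k.isLt, i.isLt, ε, b, hε, hb, rfl⟩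
    · intro i j hi hj hij
      by_cases hik : i = k
      · exact fund_pair_k k hε hTS i j (Or.inl hik)
      by_cases hjk : j = k
      · exact fund_pair_k k hε hTS i j (Or.inr hjk)
      obtain ⟨j₁, hj₁lt, hj₁⟩ := hτsurj i hik
      obtain ⟨j₂, hj₂lt, hj₂⟩ := hτsurj j hjk
      have hs₁ := (hτs j₁ hj₁lt).2
      have hs₂ := (hτs j₂ hj₂lt).2
      have hmemSH : ∀ (a b : ℝ), (a = 1 ∨ a = -1) → (b = 1 ∨ b = -1) →
          HsetD n (n-1) j₁ j₂ a b ∈ S₀ → HsetD n n i j (a * s j₁) (b * s j₂) ∈ S := by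
        intro a b ha hb hm
        exact Or.inl ⟨j₁, j₂, hj₁lt, hj₂lt, a, b, ha, hb, hm, by rw [hj₁, hj₂]; rfl⟩
      have hmemSH' : ∀ (a b : ℝ), (a = 1 ∨ a = -1) → (b = 1 ∨ b = -1) →
          HsetD n (n-1) j₂ j₁ a b ∈ S₀ → HsetD n n i j (-(b * s j₁)) (-(a * s j₂)) ∈ S := by
        intro a b ha hb hm
        have h1 : Hset n j i (a * s j₂) (b * s j₁) ∈ S :=
          Or.inl ⟨j₂, j₁, hj₂lt, hj₁lt, a, b, ha, hb, hm, by rw [hj₂, hj₁]⟩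
        show Hset n i j (-(b * s j₁)) (-(a * s j₂)) ∈ S
        rw [← Hset_swap j i (a * s j₂) (b * s j₁)]
        exact h1
      rcases le_total j₁ j₂ with hord | hord
      · obtain ⟨hR1, hR2⟩ := hS₀pairs j₁ j₂ hj₁lt hj₂lt hord
        rcases sgn_mul hs₁ hs₂ with hss | hss
        · apply fund_types
          · rcases hR1 with hm | hm
            · exact ⟨1 * s j₁, -1 * s j₂, sgn_mul (Or.inl rfl) hs₁, sgn_mul (Or.inr rfl) hs₂,
                by linear_combination -hss, hmemSH 1 (-1) (Or.inl rfl) (Or.inr rfl) hm⟩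
            · exact ⟨-1 * s j₁, 1 * s j₂, sgn_mul (Or.inr rfl) hs₁, sgn_mul (Or.inl rfl) hs₂,
                by linear_combination -hss, hmemSH (-1) 1 (Or.inr rfl) (Or.inl rfl) hm⟩
          · rcases hR2 with hm | hm
            · exact ⟨1 * s j₁, 1 * s j₂, sgn_mul (Or.inl rfl) hs₁, sgn_mul (Or.inl rfl) hs₂,
                by linear_combination hss, hmemSH 1 1 (Or.inl rfl) (Or.inl rfl) hm⟩
            · exact ⟨-1 * s j₁, -1 * s j₂, sgn_mul (Or.inr rfl) hs₁, sgn_mul (Or.inr rfl) hs₂,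
                by linear_combination hss, hmemSH (-1) (-1) (Or.inr rfl) (Or.inr rfl) hm⟩
        · apply fund_types
          · rcases hR2 with hm | hm
            · exact ⟨1 * s j₁, 1 * s j₂, sgn_mul (Or.inl rfl) hs₁, sgn_mul (Or.inl rfl) hs₂,
                by linear_combination hss, hmemSH 1 1 (Or.inl rfl) (Or.inl rfl) hm⟩
            · exact ⟨-1 * s j₁, -1 * s j₂, sgn_mul (Or.inr rfl) hs₁, sgn_mul (Or.inr rfl) hs₂,
                by linear_combination hss, hmemSH (-1) (-1) (Or.inr rfl) (Or.inr rfl) hm⟩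
          · rcases hR1 with hm | hm
            · exact ⟨1 * s j₁, -1 * s j₂, sgn_mul (Or.inl rfl) hs₁, sgn_mul (Or.inr rfl) hs₂,
                by linear_combination -hss, hmemSH 1 (-1) (Or.inl rfl) (Or.inr rfl) hm⟩
            · exact ⟨-1 * s j₁, 1 * s j₂, sgn_mul (Or.inr rfl) hs₁, sgn_mul (Or.inl rfl) hs₂,
                by linear_combination -hss, hmemSH (-1) 1 (Or.inr rfl) (Or.inl rfl) hm⟩
      · obtain ⟨hR1, hR2⟩ := hS₀pairs j₂ j₁ hj₂lt hj₁lt hord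
        rcases sgn_mul hs₁ hs₂ with hss | hss
        · apply fund_types
          · rcases hR1 with hm | hm
            · exact ⟨-((-1) * s j₁), -(1 * s j₂), sgn_neg (sgn_mul (Or.inr rfl) hs₁),
                sgn_neg (sgn_mul (Or.inl rfl) hs₂), by linear_combination -hss,
                hmemSH' 1 (-1) (Or.inl rfl) (Or.inr rfl) hm⟩
            · exact ⟨-(1 * s j₁), -((-1) * s j₂), sgn_neg (sgn_mul (Or.inl rfl) hs₁),
                sgn_neg (sgn_mul (Or.inr rfl) hs₂), by linear_combination -hss,
                hmemSH' (-1) 1 (Or.inr rfl) (Or.inl rfl) hm⟩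
          · rcases hR2 with hm | hm
            · exact ⟨-(1 * s j₁), -(1 * s j₂), sgn_neg (sgn_mul (Or.inl rfl) hs₁),
                sgn_neg (sgn_mul (Or.inl rfl) hs₂), by linear_combination hss,
                hmemSH' 1 1 (Or.inl rfl) (Or.inl rfl) hm⟩
            · exact ⟨-((-1) * s j₁), -((-1) * s j₂), sgn_neg (sgn_mul (Or.inr rfl) hs₁),
                sgn_neg (sgn_mul (Or.inr rfl) hs₂), by linear_combination hss,
                hmemSH' (-1) (-1) (Or.inr rfl) (Or.inr rfl) hm⟩
        · apply fund_types
          · rcases hR2 with hm | hm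
            · exact ⟨-(1 * s j₁), -(1 * s j₂), sgn_neg (sgn_mul (Or.inl rfl) hs₁),
                sgn_neg (sgn_mul (Or.inl rfl) hs₂), by linear_combination hss,
                hmemSH' 1 1 (Or.inl rfl) (Or.inl rfl) hm⟩
            · exact ⟨-((-1) * s j₁), -((-1) * s j₂), sgn_neg (sgn_mul (Or.inr rfl) hs₁),
                sgn_neg (sgn_mul (Or.inr rfl) hs₂), by linear_combination hss,
                hmemSH' (-1) (-1) (Or.inr rfl) (Or.inr rfl) hm⟩
          · rcases hR1 with hm | hm
            · exact ⟨-((-1) * s j₁), -(1 * s j₂), sgn_neg (sgn_mul (Or.inr rfl) hs₁),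
                sgn_neg (sgn_mul (Or.inl rfl) hs₂), by linear_combination -hss,
                hmemSH' 1 (-1) (Or.inl rfl) (Or.inr rfl) hm⟩
            · exact ⟨-(1 * s j₁), -((-1) * s j₂), sgn_neg (sgn_mul (Or.inl rfl) hs₁),
                sgn_neg (sgn_mul (Or.inr rfl) hs₂), by linear_combination -hss,
                hmemSH' (-1) 1 (Or.inr rfl) (Or.inl rfl) hm⟩
    · rw [hFface]
      exact hmain.symm
    · apply subset_antisymm
      · intro x hx
        rw [← hmain] at hx
        exact ⟨hx.1, F_sub_frontier hε hx.2⟩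
      · rintro x ⟨h1, h2⟩
        rw [← hmain]
        exact ⟨h1, bd_step hε hTS h1 h2⟩
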